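/- arXiv:0910.5455 — 2 statements merged into one kernel-verified Lean document; each statement's English description precedes it below -/
import Mathlib

section
/- Let n ≥ 2 and a be coprime positive integers with a < n, and let Λ = ℤ² + ℤ·(1/n)(1,a) ⊆ ℝ². Let P₀ = (1,0), P_k = (0,1), and let P₁,…,P_{k−1} be the primitive vectors of Λ lying on the boundary of the convex hull of (Λ ∖ {0}) ∩ ℝ²_{≥0}, ordered so that consecutive pairs span lattice triangles O Pᵥ P_{ν+1} of area 1/2 with respect to Λ. Writing ℓᵥ for the sum of the coordinates of Pᵥ, the quantity Δ₀² := −2 − Σ_{0<ν<k} ((ℓ_{ν−1}/ℓᵥ − 1) + (ℓ_{ν+1}/ℓᵥ − 1)) satisfies −n ≤ Δ₀² < 0. -/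
set_option maxHeartbeats 1600000

/-- Toric content of Lemma 3.1: for the chain of primitive boundary vectors of
the lattice `Λ = ℤ² + ℤ·(1/n)(1,a)` in the first quadrant, with `P₀ = (1,0)`,
`P_k = (0,1)`, consecutive triangles of Λ-area 1/2, and `ℓᵥ` the coordinate sum
of `Pᵥ`, the quantity `Δ₀² = -2 - Σ_{0<ν<k}((ℓ_{ν-1}/ℓᵥ - 1) + (ℓ_{ν+1}/ℓᵥ - 1))`
satisfies `-n ≤ Δ₀² < 0`. -/
theorem stmt4 (n a : ℕ) (hn : 2 ≤ n) (ha : 0 < a) (han : a < n)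
    (hcop : Nat.Coprime n a)
    (Λ : AddSubgroup (ℝ × ℝ))
    (hΛ : Λ = AddSubgroup.closure {((1:ℝ), (0:ℝ)), ((0:ℝ), (1:ℝ)), ((1:ℝ)/n, (a:ℝ)/n)})
    (k : ℕ) (hk : 1 ≤ k) (P : ℕ → ℝ × ℝ)
    (hP0 : P 0 = (1, 0)) (hPk : P k = (0, 1))
    (hmem : ∀ ν ≤ k, P ν ∈ Λ)
    (hquad : ∀ ν ≤ k, 0 ≤ (P ν).1 ∧ 0 ≤ (P ν).2)
    (hbd : ∀ ν, 0 < ν → ν < k →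
      P ν ∈ frontier (convexHull ℝ
        (((Λ : Set (ℝ × ℝ)) \ {0}) ∩ {p : ℝ × ℝ | 0 ≤ p.1 ∧ 0 ≤ p.2})))
    (ℓ : ℕ → ℝ) (hℓ : ∀ ν ≤ k, ℓ ν = (P ν).1 + (P ν).2)
    (harea : ∀ ν < k, ((P ν).1 * (P (ν+1)).2 - (P ν).2 * (P (ν+1)).1) * n = 1) :
    -(n : ℝ) ≤ -2 - ∑ ν ∈ Finset.Ioo 0 k,
        ((ℓ (ν-1)) / (ℓ ν) - 1 + ((ℓ (ν+1)) / (ℓ ν) - 1))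
    ∧ -2 - ∑ ν ∈ Finset.Ioo 0 k,
        ((ℓ (ν-1)) / (ℓ ν) - 1 + ((ℓ (ν+1)) / (ℓ ν) - 1)) < 0 := by
  have hn0 : (n:ℝ) ≠ 0 := by positivity
  -- Step 1: integrality of lattice points in suitable coordinates
  have hint : ∀ p ∈ Λ, (∃ i:ℤ, (n:ℝ)*p.1 = i) ∧ (∃ j:ℤ, p.2 - a*p.1 = j) := by
    intro p hp
    rw [hΛ] at hp
    induction hp using AddSubgroup.closure_induction with
    | mem x hx =>
        rcases hx with h | h | h <;> subst h
        · exact ⟨⟨(n:ℤ), by push_cast; ring⟩, ⟨-(a:ℤ), by push_cast; ring⟩⟩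
        · exact ⟨⟨0, by push_cast; ring⟩, ⟨1, by push_cast; ring⟩⟩
        · refine ⟨⟨1, by push_cast; field_simp⟩, ⟨0, by push_cast; field_simp; ring⟩⟩
    | zero => exact ⟨⟨0, by norm_num⟩, ⟨0, by norm_num⟩⟩
    | add x y hx hy ihx ihy =>
        obtain ⟨⟨i1, h1⟩, ⟨j1, h2⟩⟩ := ihx
        obtain ⟨⟨i2, h3⟩, ⟨j2, h4⟩⟩ := ihy
        refine ⟨⟨i1 + i2, ?_⟩, ⟨j1 + j2, ?_⟩⟩
        · simp only [Prod.fst_add]; push_cast; linear_combination h1 + h3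
        · simp only [Prod.snd_add, Prod.fst_add]; push_cast; linear_combination h2 + h4
    | neg x hx ihx =>
        obtain ⟨⟨i1, h1⟩, ⟨j1, h2⟩⟩ := ihx
        refine ⟨⟨-i1, ?_⟩, ⟨-j1, ?_⟩⟩
        · simp only [Prod.fst_neg]; push_cast; linear_combination -h1
        · simp only [Prod.snd_neg, Prod.fst_neg]; push_cast; linear_combination -h2
  -- choose integer coordinates
  have h1 : ∀ ν, ∃ (i j : ℤ), ν ≤ k →
      ((n:ℝ)*(P ν).1 = i ∧ (P ν).2 - a*(P ν).1 = j) := by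
    intro ν
    by_cases h : ν ≤ k
    · obtain ⟨⟨i, hi⟩, ⟨j, hj⟩⟩ := hint _ (hmem ν h)
      exact ⟨i, j, fun _ => ⟨hi, hj⟩⟩
    · exact ⟨0, 0, fun hh => absurd hh h⟩
  choose u v huv using h1
  have hu : ∀ ν ≤ k, (n:ℝ)*(P ν).1 = u ν := fun ν h => ((huv ν) h).1
  have hv : ∀ ν ≤ k, (P ν).2 - a*(P ν).1 = v ν := fun ν h => ((huv ν) h).2
  -- determinant 1 in integer coordinates
  have hdet : ∀ ν < k, u ν * v (ν+1) - v ν * u (ν+1) = 1 := by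
    intro ν hν
    have e := harea ν hν
    have h1 := hu ν hν.le
    have h2 := hv ν hν.le
    have h3 := hu (ν+1) hν
    have h4 := hv (ν+1) hν
    have : ((u ν * v (ν+1) - v ν * u (ν+1) : ℤ) : ℝ) = 1 := by
      push_cast
      rw [← h1, ← h2, ← h3, ← h4]
      linear_combination e
    exact_mod_cast this
  -- positivity of ℓ
  have hPne : ∀ ν ≤ k, P ν ≠ 0 := by
    intro ν hν h0
    rcases lt_or_eq_of_le hν with h | h
    · have := harea ν h
      rw [h0] at this
      simp at this
    · rw [h, hPk] at h0
      simpa using congrArg Prod.snd h0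
  have hlpos : ∀ ν ≤ k, 0 < ℓ ν := by
    intro ν hν
    rw [hℓ ν hν]
    obtain ⟨h1, h2⟩ := hquad ν hν
    rcases lt_or_eq_of_le h1 with h | h
    · linarith
    rcases lt_or_eq_of_le h2 with h' | h'
    · linarith
    exact absurd (Prod.ext h.symm h'.symm) (hPne ν hν)
  -- the integers c ν
  set c : ℕ → ℤ := fun ν => u (ν-1) * v (ν+1) - v (ν-1) * u (ν+1) with hc_def
  -- key identity P(ν-1) + P(ν+1) = c ν • P ν
  have key : ∀ ν, 0 < ν → ν < k → P (ν-1) + P (ν+1) = (c ν : ℝ) • P ν := by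
    intro ν hν0 hνk
    set A := P (ν-1); set B := P ν; set C := P (ν+1)
    have hsub : ν - 1 + 1 = ν := by omega
    have e1 : (A.1*B.2 - A.2*B.1) * n = 1 := by
      have := harea (ν-1) (by omega)
      rwa [hsub] at this
    have e2 : (B.1*C.2 - B.2*C.1) * n = 1 := harea ν hνk
    have hA1 := hu (ν-1) (by omega)
    have hA2 := hv (ν-1) (by omega)
    have hB1 := hu ν hνk.le
    have hB2 := hv ν hνk.le
    have hC1 := hu (ν+1) hνk
    have hC2 := hv (ν+1) hνk
    have hc : (c ν : ℝ) = n * (A.1*C.2 - A.2*C.1) := by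
      show ((u (ν-1) * v (ν+1) - v (ν-1) * u (ν+1) : ℤ) : ℝ) = _
      push_cast
      rw [← hA1, ← hA2, ← hC1, ← hC2]
      ring
    have dDB : ((A.1+C.1-(c ν:ℝ)*B.1)*B.2 - (A.2+C.2-(c ν:ℝ)*B.2)*B.1) * n = 0 := by
      linear_combination e1 - e2
    have dDC : ((A.1+C.1-(c ν:ℝ)*B.1)*C.2 - (A.2+C.2-(c ν:ℝ)*B.2)*C.1) * n = 0 := by
      linear_combination -hc - (c ν : ℝ) * e2
    have g1 : A.1 + C.1 = (c ν : ℝ) * B.1 := by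
      linear_combination (-(A.1+C.1-(c ν:ℝ)*B.1))*e2 + B.1*dDC - C.1*dDB
    have g2 : A.2 + C.2 = (c ν : ℝ) * B.2 := by
      linear_combination (-(A.2+C.2-(c ν:ℝ)*B.2))*e2 + B.2*dDC - C.2*dDB
    ext
    · simpa using g1
    · simpa using g2
  -- ℓ recurrence
  have hlrec : ∀ ν, 0 < ν → ν < k → ℓ (ν-1) + ℓ (ν+1) = (c ν : ℝ) * ℓ ν := by
    intro ν hν0 hνk
    have hkey := key ν hν0 hνk
    have g1 : (P (ν-1)).1 + (P (ν+1)).1 = (c ν : ℝ) * (P ν).1 := by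
      have := congrArg Prod.fst hkey; simpa using this
    have g2 : (P (ν-1)).2 + (P (ν+1)).2 = (c ν : ℝ) * (P ν).2 := by
      have := congrArg Prod.snd hkey; simpa using this
    rw [hℓ (ν-1) (by omega), hℓ (ν+1) hνk, hℓ ν hνk.le]
    linarith
  -- c ν ≥ 1
  have hc1 : ∀ ν, 0 < ν → ν < k → 1 ≤ c ν := by
    intro ν hν0 hνk
    have h := hlrec ν hν0 hνk
    have p1 := hlpos (ν-1) (by omega)
    have p2 := hlpos (ν+1) hνk
    have p3 := hlpos ν hνk.le
    have h0 : (0:ℝ) < (c ν : ℝ) * ℓ ν := by linarith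
    have : (0:ℝ) < (c ν : ℝ) := by
      by_contra hle
      push_neg at hle
      nlinarith
    exact_mod_cast Int.cast_pos.mp (by exact_mod_cast this)
  -- the convex body
  set S : Set (ℝ × ℝ) := ((Λ : Set (ℝ × ℝ)) \ {0}) ∩ {p : ℝ × ℝ | 0 ≤ p.1 ∧ 0 ≤ p.2}
    with hS_def
  set K : Set (ℝ × ℝ) := convexHull ℝ S with hK_def
  have hKconv : Convex ℝ K := convex_convexHull ℝ S
  -- c ν ≥ 2 via the frontier hypothesis
  have hc2 : ∀ ν, 0 < ν → ν < k → 2 ≤ c ν := by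
    intro ν hν0 hνk
    rcases (hc1 ν hν0 hνk).lt_or_eq with h | h
    · omega
    exfalso
    -- c ν = 1 : derive that P ν is interior to K
    set A := P (ν-1) with hA_def
    set B := P ν with hB_def
    set C := P (ν+1) with hC_def
    have hsub : ν - 1 + 1 = ν := by omega
    have e1 : (A.1*B.2 - A.2*B.1) * n = 1 := by
      have := harea (ν-1) (by omega)
      rwa [hsub] at this
    have e2 : (B.1*C.2 - B.2*C.1) * n = 1 := harea ν hνk
    have hBAC : A + C = B := by
      have := key ν hν0 hνk
      rw [← h] at this
      simpa using this
    have hcn : (n:ℝ) * (A.1*C.2 - A.2*C.1) = 1 := by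
      have h2 : (B.1 + -A.1) = C.1 := by
        have := congrArg Prod.fst hBAC; simp at this; linarith
      have h3 : (B.2 + -A.2) = C.2 := by
        have := congrArg Prod.snd hBAC; simp at this; linarith
      rw [← h2, ← h3]
      linear_combination e1
    have hAq := hquad (ν-1) (by omega)
    have hBq := hquad ν hνk.le
    have hCq := hquad (ν+1) hνk
    -- the four lattice points
    have hAS : A ∈ S := by
      refine ⟨⟨hmem (ν-1) (by omega), ?_⟩, hAq⟩
      intro h0
      simp only [Set.mem_singleton_iff] at h0
      rw [h0] at e1; simp at e1
    have hCS : C ∈ S := by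
      refine ⟨⟨hmem (ν+1) hνk, ?_⟩, hCq⟩
      intro h0
      simp only [Set.mem_singleton_iff] at h0
      rw [h0] at e2; simp at e2
    have hBCS : B + C ∈ S := by
      refine ⟨⟨Λ.add_mem (hmem ν hνk.le) (hmem (ν+1) hνk), ?_⟩, ?_⟩
      · intro h0
        simp only [Set.mem_singleton_iff] at h0
        have e3 : ((B+C).1*C.2 - (B+C).2*C.1) * n = 1 := by
          simp only [Prod.fst_add, Prod.snd_add]
          linear_combination e2
        rw [h0] at e3; simp at e3
      · exact ⟨by simp [Prod.fst_add]; linarith [hBq.1, hCq.1],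
               by simp [Prod.snd_add]; linarith [hBq.2, hCq.2]⟩
    have hABS : A + B ∈ S := by
      refine ⟨⟨Λ.add_mem (hmem (ν-1) (by omega)) (hmem ν hνk.le), ?_⟩, ?_⟩
      · intro h0
        simp only [Set.mem_singleton_iff] at h0
        have e3 : (A.1*(A+B).2 - A.2*(A+B).1) * n = 1 := by
          simp only [Prod.fst_add, Prod.snd_add]
          linear_combination e1
        rw [h0] at e3; simp at e3
      · exact ⟨by simp [Prod.fst_add]; linarith [hBq.1, hAq.1],
               by simp [Prod.snd_add]; linarith [hBq.2, hAq.2]⟩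
    -- corners of the square in (A,C)-coordinates are in K
    have hsub4 : ∀ x ∈ S, x ∈ K := fun x hx => subset_convexHull ℝ S hx
    have hmid : ∀ x ∈ K, ∀ y ∈ K, (1/2 : ℝ) • x + (1/2 : ℝ) • y ∈ K := by
      intro x hx y hy
      exact hKconv hx hy (by norm_num) (by norm_num) (by norm_num)
    have hm1 : (1/2 : ℝ) • A + (1/2 : ℝ) • C ∈ K :=
      hmid A (hsub4 A hAS) C (hsub4 C hCS)
    have hm2 : (1/2 : ℝ) • A + (1/2 : ℝ) • (A + B) ∈ K :=
      hmid A (hsub4 A hAS) (A+B) (hsub4 _ hABS)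
    have hm3 : (1/2 : ℝ) • C + (1/2 : ℝ) • (B + C) ∈ K :=
      hmid C (hsub4 C hCS) (B+C) (hsub4 _ hBCS)
    have hm4 : (1/2 : ℝ) • (A + B) + (1/2 : ℝ) • (B + C) ∈ K :=
      hmid (A+B) (hsub4 _ hABS) (B+C) (hsub4 _ hBCS)
    -- every point of the open square is in K
    have hsq : ∀ s t : ℝ, 1/2 ≤ s → s ≤ 3/2 → 1/2 ≤ t → t ≤ 3/2 →
        s • A + t • C ∈ K := by
      intro s t hs1 hs2 ht1 ht2
      have hrow1 : s • A + (1/2 : ℝ) • C ∈ K := by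
        have := hKconv hm1 hm2 (a := 3/2 - s) (b := s - 1/2)
          (by linarith) (by linarith) (by ring)
        convert this using 1
        rw [hBAC.symm]
        ext <;> simp <;> ring
      have hrow2 : s • A + (3/2 : ℝ) • C ∈ K := by
        have := hKconv hm3 hm4 (a := 3/2 - s) (b := s - 1/2)
          (by linarith) (by linarith) (by ring)
        convert this using 1
        rw [hBAC.symm]
        ext <;> simp <;> ring
      have := hKconv hrow1 hrow2 (a := 3/2 - t) (b := t - 1/2)
        (by linarith) (by linarith) (by ring)
      convert this using 1
      ext <;> simp <;> ring
    -- B is in the interior of K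
    obtain ⟨R, hR_def⟩ : ∃ R : ℝ, R = n * (|A.1| + |A.2| + |C.1| + |C.2|) + 1 :=
      ⟨_, rfl⟩
    have h0a : (0:ℝ) ≤ |A.1| := abs_nonneg _
    have h0b : (0:ℝ) ≤ |A.2| := abs_nonneg _
    have h0c : (0:ℝ) ≤ |C.1| := abs_nonneg _
    have h0d : (0:ℝ) ≤ |C.2| := abs_nonneg _
    have hnn : (0:ℝ) ≤ n := by positivity
    have hRpos : 0 < R := by rw [hR_def]; positivity
    have hball : Metric.ball B (1/(2*R)) ⊆ K := by
      intro z hz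
      obtain ⟨w, hw_def⟩ : ∃ w : ℝ × ℝ, w = z - B := ⟨_, rfl⟩
      have hwn : ‖w‖ < 1/(2*R) := by
        rw [hw_def, ← dist_eq_norm]
        exact Metric.mem_ball.mp hz
      have hw1 : |w.1| ≤ ‖w‖ := by
        have := norm_fst_le w; simpa using this
      have hw2 : |w.2| ≤ ‖w‖ := by
        have := norm_snd_le w; simpa using this
      have hwnn : 0 ≤ ‖w‖ := norm_nonneg w
      have hwR : ‖w‖ * R < 1/2 := by
        have hR0 : R ≠ 0 := ne_of_gt hRpos
        calc ‖w‖ * R < (1/(2*R)) * R := mul_lt_mul_of_pos_right hwn hRpos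
          _ = 1/2 := by field_simp
      obtain ⟨s, hs_def⟩ : ∃ s : ℝ, s = 1 + n * (w.1*C.2 - w.2*C.1) := ⟨_, rfl⟩
      obtain ⟨t, ht_def⟩ : ∃ t : ℝ, t = 1 + n * (w.2*A.1 - w.1*A.2) := ⟨_, rfl⟩
      have habs : ∀ x y p q : ℝ, |x| ≤ ‖w‖ → |y| ≤ ‖w‖ →
          |x * p - y * q| ≤ ‖w‖ * (|p| + |q|) := by
        intro x y p q hx hy
        have h1 : |x * p - y * q| ≤ |x * p| + |y * q| := abs_sub _ _
        rw [abs_mul, abs_mul] at h1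
        have h2 : |x| * |p| ≤ ‖w‖ * |p| :=
          mul_le_mul_of_nonneg_right hx (abs_nonneg _)
        have h3 : |y| * |q| ≤ ‖w‖ * |q| :=
          mul_le_mul_of_nonneg_right hy (abs_nonneg _)
        calc |x * p - y * q| ≤ |x| * |p| + |y| * |q| := h1
          _ ≤ ‖w‖ * |p| + ‖w‖ * |q| := by linarith
          _ = ‖w‖ * (|p| + |q|) := by ring
      have hsb : |s - 1| < 1/2 := by
        rw [hs_def, add_sub_cancel_left, abs_mul, Nat.abs_cast]
        have h1 : |w.1 * C.2 - w.2 * C.1| ≤ ‖w‖ * (|C.2| + |C.1|) :=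
          habs _ _ _ _ hw1 hw2
        have h2 : (n:ℝ) * |w.1 * C.2 - w.2 * C.1| ≤ n * (‖w‖ * (|C.2| + |C.1|)) :=
          mul_le_mul_of_nonneg_left h1 hnn
        have h3 : (n:ℝ) * (‖w‖ * (|C.2| + |C.1|)) ≤ ‖w‖ * R := by
          rw [hR_def]
          have h4 : (n:ℝ) * (|C.2| + |C.1|) ≤ n * (|A.1| + |A.2| + |C.1| + |C.2|) + 1 := by
            have := mul_le_mul_of_nonneg_left
              (show |C.2| + |C.1| ≤ |A.1| + |A.2| + |C.1| + |C.2| by linarith) hnn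
            linarith
          calc (n:ℝ) * (‖w‖ * (|C.2| + |C.1|)) = ‖w‖ * ((n:ℝ) * (|C.2| + |C.1|)) := by
                ring
            _ ≤ ‖w‖ * (n * (|A.1| + |A.2| + |C.1| + |C.2|) + 1) :=
                mul_le_mul_of_nonneg_left h4 hwnn
        linarith
      have htb : |t - 1| < 1/2 := by
        rw [ht_def, add_sub_cancel_left, abs_mul, Nat.abs_cast]
        have h1 : |w.2 * A.1 - w.1 * A.2| ≤ ‖w‖ * (|A.1| + |A.2|) :=
          habs _ _ _ _ hw2 hw1
        have h2 : (n:ℝ) * |w.2 * A.1 - w.1 * A.2| ≤ n * (‖w‖ * (|A.1| + |A.2|)) :=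
          mul_le_mul_of_nonneg_left h1 hnn
        have h3 : (n:ℝ) * (‖w‖ * (|A.1| + |A.2|)) ≤ ‖w‖ * R := by
          rw [hR_def]
          have h4 : (n:ℝ) * (|A.1| + |A.2|) ≤ n * (|A.1| + |A.2| + |C.1| + |C.2|) + 1 := by
            have := mul_le_mul_of_nonneg_left
              (show |A.1| + |A.2| ≤ |A.1| + |A.2| + |C.1| + |C.2| by linarith) hnn
            linarith
          calc (n:ℝ) * (‖w‖ * (|A.1| + |A.2|)) = ‖w‖ * ((n:ℝ) * (|A.1| + |A.2|)) := by
                ring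
            _ ≤ ‖w‖ * (n * (|A.1| + |A.2| + |C.1| + |C.2|) + 1) :=
                mul_le_mul_of_nonneg_left h4 hwnn
        linarith
      have hz' : z = s • A + t • C := by
        have hzw : z = (A + C) + w := by rw [hw_def, ← hBAC]; abel
        have c1 : A.1 + C.1 + w.1 = s * A.1 + t * C.1 := by
          rw [hs_def, ht_def]
          linear_combination -w.1 * hcn
        have c2 : A.2 + C.2 + w.2 = s * A.2 + t * C.2 := by
          rw [hs_def, ht_def]
          linear_combination -w.2 * hcn
        rw [hzw]
        ext
        · simpa using c1
        · simpa using c2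
      rw [hz']
      have hs' := abs_lt.mp hsb
      have ht' := abs_lt.mp htb
      exact hsq s t (by linarith [hs'.1]) (by linarith [hs'.2])
        (by linarith [ht'.1]) (by linarith [ht'.2])
    have hBint : B ∈ interior K :=
      mem_interior_iff_mem_nhds.mpr
        (Filter.mem_of_superset (Metric.ball_mem_nhds B (by positivity)) hball)
    exact (hbd ν hν0 hνk).2 hBint
  -- the auxiliary integer sequence d
  obtain ⟨d, hd_def⟩ : ∃ d : ℕ → ℤ, d = fun ν => u 0 * v ν - v 0 * u ν := ⟨_, rfl⟩
  have hd0 : d 0 = 0 := by rw [hd_def]; ring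
  have hd1 : d 1 = 1 := by
    rw [hd_def]; exact hdet 0 hk
  have hu0 : u 0 = n := by
    have := hu 0 (Nat.zero_le k)
    rw [hP0] at this
    norm_num at this
    exact_mod_cast (by push_cast; linarith : ((u 0 : ℤ) : ℝ) = n)
  have hv0 : v 0 = -a := by
    have := hv 0 (Nat.zero_le k)
    rw [hP0] at this
    norm_num at this
    exact_mod_cast (by push_cast; linarith : ((v 0 : ℤ) : ℝ) = -a)
  have huk : u k = 0 := by
    have := hu k le_rfl
    rw [hPk] at this
    norm_num at this
    exact_mod_cast (by push_cast; linarith : ((u k : ℤ) : ℝ) = 0)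
  have hvk : v k = 1 := by
    have := hv k le_rfl
    rw [hPk] at this
    norm_num at this
    exact_mod_cast (by push_cast; linarith : ((v k : ℤ) : ℝ) = 1)
  have hdk : d k = n := by rw [hd_def]; simp [huk, hvk, hu0]
  -- recurrence for u, v and hence d
  have hurec : ∀ ν, 0 < ν → ν < k → u (ν-1) + u (ν+1) = c ν * u ν := by
    intro ν hν0 hνk
    have hkey := key ν hν0 hνk
    have g1 : (P (ν-1)).1 + (P (ν+1)).1 = (c ν : ℝ) * (P ν).1 := by
      have := congrArg Prod.fst hkey; simpa using this
    have : ((u (ν-1) + u (ν+1) : ℤ) : ℝ) = ((c ν * u ν : ℤ) : ℝ) := by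
      push_cast
      rw [← hu (ν-1) (by omega), ← hu (ν+1) hνk, ← hu ν hνk.le]
      linear_combination (n:ℝ) * g1
    exact_mod_cast this
  have hvrec : ∀ ν, 0 < ν → ν < k → v (ν-1) + v (ν+1) = c ν * v ν := by
    intro ν hν0 hνk
    have hkey := key ν hν0 hνk
    have g1 : (P (ν-1)).1 + (P (ν+1)).1 = (c ν : ℝ) * (P ν).1 := by
      have := congrArg Prod.fst hkey; simpa using this
    have g2 : (P (ν-1)).2 + (P (ν+1)).2 = (c ν : ℝ) * (P ν).2 := by
      have := congrArg Prod.snd hkey; simpa using this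
    have : ((v (ν-1) + v (ν+1) : ℤ) : ℝ) = ((c ν * v ν : ℤ) : ℝ) := by
      push_cast
      rw [← hv (ν-1) (by omega), ← hv (ν+1) hνk, ← hv ν hνk.le]
      linear_combination g2 - (a:ℝ) * g1
    exact_mod_cast this
  have hdrec : ∀ ν, 0 < ν → ν < k → d (ν-1) + d (ν+1) = c ν * d ν := by
    intro ν hν0 hνk
    rw [hd_def]
    simp only
    have h1 := hurec ν hν0 hνk
    have h2 := hvrec ν hν0 hνk
    nlinarith [h1, h2]
  -- main induction
  have main : ∀ μ, 1 ≤ μ → μ ≤ k →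
      (μ:ℤ) ≤ d μ ∧ 1 + ∑ ν ∈ Finset.Ioo 0 μ, (c ν - 2) ≤ d μ - d (μ-1) := by
    intro μ hμ1
    induction μ, hμ1 using Nat.le_induction with
    | base =>
        intro _
        constructor
        · rw [hd1]; norm_num
        · have : Finset.Ioo 0 1 = (∅ : Finset ℕ) := rfl
          rw [this]
          simp [hd1, hd0]
    | succ μ hμ ih =>
        intro hμk
        have hμk' : μ < k := by omega
        obtain ⟨ih1, ih2⟩ := ih hμk'.le
        have hrec := hdrec μ (by omega) hμk'
        have hcμ := hc2 μ (by omega) hμk'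
        have hsum : ∑ ν ∈ Finset.Ioo 0 (μ+1), (c ν - 2)
            = ∑ ν ∈ Finset.Ioo 0 μ, (c ν - 2) + (c μ - 2) := by
          have hins : Finset.Ioo 0 (μ+1) = insert μ (Finset.Ioo 0 μ) := by
            ext x
            simp only [Finset.mem_Ioo, Finset.mem_insert]
            omega
          rw [hins, Finset.sum_insert (by simp)]
          ring
        have hstep : 1 + ∑ ν ∈ Finset.Ioo 0 (μ+1), (c ν - 2) ≤ d (μ+1) - d μ := by
          rw [hsum]
          have h5 : d (μ+1) - d μ = (c μ - 2) * d μ + (d μ - d (μ-1)) := by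
            linarith [hrec]
          have h6 : (c μ - 2) * 1 ≤ (c μ - 2) * d μ :=
            mul_le_mul_of_nonneg_left (by omega : (1:ℤ) ≤ d μ) (by omega)
          omega
        constructor
        · have hnn : 0 ≤ ∑ ν ∈ Finset.Ioo 0 (μ+1), (c ν - 2) :=
            Finset.sum_nonneg fun ν hν => by
              have := hc2 ν (Finset.mem_Ioo.mp hν).1 (by
                have := (Finset.mem_Ioo.mp hν).2; omega)
              omega
          have : d (μ+1) = d μ + (d (μ+1) - d μ) := by ring
          omega
        · simpa using hstep
  -- the integer sum and its bounds
  obtain ⟨Sz, hSz⟩ : ∃ Sz : ℤ, Sz = ∑ ν ∈ Finset.Ioo 0 k, (c ν - 2) := ⟨_, rfl⟩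
  have hSznn : 0 ≤ Sz := by
    rw [hSz]
    exact Finset.sum_nonneg fun ν hν => by
      have h1 := (Finset.mem_Ioo.mp hν).1
      have h2 := (Finset.mem_Ioo.mp hν).2
      have := hc2 ν h1 h2
      omega
  have hSzub : Sz ≤ (n:ℤ) - 2 := by
    rcases eq_or_lt_of_le hk with h | h
    · have : Finset.Ioo 0 k = ∅ := by rw [← h]; rfl
      rw [hSz, this]
      simp
      omega
    · -- k ≥ 2
      obtain ⟨m1, m2⟩ := main k hk le_rfl
      obtain ⟨m3, _⟩ := main (k-1) (by omega) (by omega)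
      rw [← hSz] at m2
      have hdk1 : (1:ℤ) ≤ d (k-1) := by
        have : ((k:ℤ) - 1) ≤ d (k-1) := by
          have : ((k-1 : ℕ) : ℤ) = (k:ℤ) - 1 := by omega
          omega
        omega
      have : (n:ℤ) = d (k-1) + (d k - d (k-1)) := by rw [hdk]; ring
      omega
  -- identify the real sum with Sz
  have hsum_eq : ∑ ν ∈ Finset.Ioo 0 k, ((ℓ (ν-1)) / (ℓ ν) - 1 + ((ℓ (ν+1)) / (ℓ ν) - 1))
      = (Sz : ℝ) := by
    rw [hSz]
    push_cast
    rw [Finset.sum_congr rfl]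
    intro ν hν
    have h1 := (Finset.mem_Ioo.mp hν).1
    have h2 := (Finset.mem_Ioo.mp hν).2
    have hrec := hlrec ν h1 h2
    have hℓν := hlpos ν h2.le
    field_simp
    linear_combination hrec
  rw [hsum_eq]
  constructor
  · have : (Sz:ℝ) ≤ (n:ℝ) - 2 := by exact_mod_cast hSzub
    linarith
  · have : (0:ℝ) ≤ (Sz:ℝ) := by exact_mod_cast hSznn
    linarith
end

section
/- Let m ≥ 1, and suppose real numbers e_X, c₂X̃, d̂, δ̂, π̂, q and weights w₀,…,w₄ (with |w| = Σwᵢ, w₄ = max wᵢ) satisfy: (i) c₂X̂ = m·e_X − Σᵢ(wᵢ−1)·eᵢ − Σ_{x∈Q}(h_x−1) where each eᵢ satisfies 2−2π̂ > eᵢ ≥ 2−2π̂−4d̂; (ii) c₂X̃ ≤ e_X + Σ_{x∈Q}(r_x−1); (iii) Q has at most 10d̂ elements, each r_x ≤ w₄ and h_x ≤ m; (iv) 2π̂ − 2 = d̂ + δ̂. Then c₂X̂ ≥ m·c₂X̃ − (10·m·w₄ − (|w|−5))·d̂ + (|w|−5)·δ̂. -/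
/-- Arithmetic content of Proposition 4.2: under the stated numerical hypotheses
one gets `c₂(X̂) ≥ m c₂(X̃) - (10 m w₄ - (|w|-5)) d̂ + (|w|-5) δ̂`. -/
theorem stmt10 {α : Type*} (m : ℝ) (hm : 1 ≤ m) (w : Fin 5 → ℕ)
    (hw : ∀ i, 1 ≤ w i) (hw4 : ∀ i, w i ≤ w 4)
    (Q : Finset α) (r h : α → ℝ) (e : Fin 5 → ℝ)
    (eX c2til c2hat dhat δhat πhat : ℝ)
    (h1 : c2hat = m * eX - (∑ i, ((w i : ℝ) - 1) * e i) - ∑ x ∈ Q, (h x - 1))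
    (h2 : ∀ i, e i < 2 - 2 * πhat ∧ 2 - 2 * πhat - 4 * dhat ≤ e i)
    (h3 : c2til ≤ eX + ∑ x ∈ Q, (r x - 1))
    (h4 : (Q.card : ℝ) ≤ 10 * dhat)
    (h5 : ∀ x ∈ Q, r x ≤ (w 4 : ℝ) ∧ h x ≤ m)
    (h6 : 2 * πhat - 2 = dhat + δhat) :
    c2hat ≥ m * c2til - (10 * m * (w 4 : ℝ) - ((∑ i, (w i : ℝ)) - 5)) * dhat
      + ((∑ i, (w i : ℝ)) - 5) * δhat := by
  have hmw : (0:ℝ) ≤ m * (w 4 : ℝ) := by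
    have : (1:ℝ) ≤ (w 4 : ℝ) := by exact_mod_cast hw 4
    nlinarith
  -- sum of per-point contributions
  have hsum : ∑ x ∈ Q, (m * (r x - 1) + (h x - 1)) ≤ (Q.card : ℝ) * (m * (w 4 : ℝ)) := by
    calc ∑ x ∈ Q, (m * (r x - 1) + (h x - 1))
        ≤ ∑ _x ∈ Q, m * (w 4 : ℝ) := by
          apply Finset.sum_le_sum
          intro x hx
          obtain ⟨hr, hh⟩ := h5 x hx
          nlinarith
      _ = (Q.card : ℝ) * (m * (w 4 : ℝ)) := by
          rw [Finset.sum_const, nsmul_eq_mul]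
  have hkey : m * (∑ x ∈ Q, (r x - 1)) + ∑ x ∈ Q, (h x - 1) ≤ 10 * m * (w 4 : ℝ) * dhat := by
    have : m * (∑ x ∈ Q, (r x - 1)) + ∑ x ∈ Q, (h x - 1)
        = ∑ x ∈ Q, (m * (r x - 1) + (h x - 1)) := by
      rw [Finset.mul_sum, Finset.sum_add_distrib]
    rw [this]
    nlinarith [hsum, mul_le_mul_of_nonneg_right h4 hmw]
  -- bound the weighted euler sum
  have hS : (∑ i, ((w i : ℝ) - 1) * e i) ≤ (∑ i, ((w i : ℝ) - 1)) * (2 - 2 * πhat) := by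
    rw [Finset.sum_mul]
    apply Finset.sum_le_sum
    intro i _
    have hwi : (1:ℝ) ≤ (w i : ℝ) := by exact_mod_cast hw i
    have := (h2 i).1
    nlinarith
  have hSeq : (∑ i, ((w i : ℝ) - 1)) = (∑ i, (w i : ℝ)) - 5 := by
    rw [Finset.sum_sub_distrib]
    simp
  rw [hSeq] at hS
  have h3' : m * c2til ≤ m * eX + m * ∑ x ∈ Q, (r x - 1) := by
    have := mul_le_mul_of_nonneg_left h3 (by linarith : (0:ℝ) ≤ m)
    linarith [this]
  have h7 : (2 - 2 * πhat) = -(dhat + δhat) := by linarith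
  rw [h7] at hS
  nlinarith [hS, h3', hkey]
end
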